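/- Let F_M be a cumulative distribution function on [0, v̄] with density f_M, and suppose the map x ↦ x·f_M(x)/F_M(x) is non-increasing on (0, v̄]. Then for every fixed t ∈ (0,1), the ratio k ↦ F_M(t·k)/F_M(k) is non-decreasing in k on (0, v̄] (wherever F_M(k) > 0). -/

import Mathlib

/-- If `x ↦ x * f x / F x` is non-increasing on `(0, v̄]` for a CDF `F` with density `f`
supported on `[0, v̄]`, then for every `t ∈ (0,1)` the map `k ↦ F (t*k) / F k` is
non-decreasing on `(0, v̄]`. -/
theorem ratio_cdf_monotone
    (F f : ℝ → ℝ) (vbar : ℝ) (hvbar : 0 < vbar)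
    (hderiv : ∀ x, HasDerivAt F (f x) x)
    (hf_nonneg : ∀ x, 0 ≤ f x)
    (hF_pos : ∀ k ∈ Set.Ioc (0 : ℝ) vbar, 0 < F k)
    (hanti : AntitoneOn (fun x => x * f x / F x) (Set.Ioc (0 : ℝ) vbar)) :
    ∀ t ∈ Set.Ioo (0 : ℝ) 1,
      MonotoneOn (fun k => F (t * k) / F k) (Set.Ioc (0 : ℝ) vbar) := by
  intro t ht
  obtain ⟨ht0, ht1⟩ := ht
  have hFdiff : Differentiable ℝ F := fun x => (hderiv x).differentiableAt
  have hFc : Continuous F := hFdiff.continuous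
  have htk_mem : ∀ k ∈ Set.Ioc (0 : ℝ) vbar, t * k ∈ Set.Ioc (0 : ℝ) vbar := by
    intro k hk
    exact ⟨mul_pos ht0 hk.1, le_trans (by nlinarith [hk.1] : t * k ≤ k) hk.2⟩
  have hder : ∀ k ∈ Set.Ioo (0 : ℝ) vbar,
      HasDerivAt (fun k => F (t * k) / F k)
        ((f (t * k) * t * F k - F (t * k) * f k) / (F k) ^ 2) k := by
    intro k hk
    have hk' : k ∈ Set.Ioc (0 : ℝ) vbar := ⟨hk.1, hk.2.le⟩
    have h1 : HasDerivAt (fun k => F (t * k)) (f (t * k) * t) k := by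
      have := (hderiv (t * k)).comp k ((hasDerivAt_id k).const_mul t)
      simpa [Function.comp_def] using this
    exact h1.div (hderiv k) (hF_pos k hk').ne'
  have key : ∀ k ∈ Set.Ioo (0 : ℝ) vbar,
      0 ≤ (f (t * k) * t * F k - F (t * k) * f k) / (F k) ^ 2 := by
    intro k hk
    have hk' : k ∈ Set.Ioc (0 : ℝ) vbar := ⟨hk.1, hk.2.le⟩
    have htk := htk_mem k hk'
    have hle : t * k ≤ k := by nlinarith [hk.1]
    have h := hanti htk hk' hle
    simp only at h
    have hFk := hF_pos k hk'
    have hFtk := hF_pos (t * k) htk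
    have hk0 := hk.1
    -- h : k * f k / F k ≤ (t*k) * f (t*k) / F (t*k)
    rw [div_le_div_iff₀ hFk hFtk] at h
    have hnum : 0 ≤ f (t * k) * t * F k - F (t * k) * f k := by nlinarith
    positivity
  have hconv : Convex ℝ (Set.Ioc (0 : ℝ) vbar) := convex_Ioc _ _
  have hcont : ContinuousOn (fun k => F (t * k) / F k) (Set.Ioc (0 : ℝ) vbar) := by
    apply ContinuousOn.div
    · exact (hFc.comp (continuous_const.mul continuous_id)).continuousOn
    · exact hFc.continuousOn
    · exact fun k hk => (hF_pos k hk).ne'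
  apply monotoneOn_of_deriv_nonneg hconv ?_ ?_
  · intro k hk
    rw [interior_Ioc] at hk
    rw [(hder k hk).deriv]
    exact key k hk
  · exact hcont
  · intro k hk
    rw [interior_Ioc] at hk
    exact (hder k hk).differentiableAt.differentiableWithinAt
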